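/- Let delta >= 3, ell = 2^{delta-1} - 1, and f = floor((2^{2*delta-2} - delta)/delta). Let h(x) in Z_4[x] be a monic polynomial of degree delta-1 dividing x^ell - 1 in Z_4[x] whose reduction modulo 2 is a primitive polynomial over F_2, let R = Z_4[x]/(h(x)) with alpha the class of x (so alpha has multiplicative order ell and R is a free Z_4-module with basis 1, alpha, ..., alpha^{delta-2}), and let (t_1, ..., t_{ell+1}) = (0, 1, alpha, ..., alpha^{ell-1}). Enumerate r_{(j-1)(ell+1)+k} = t_k + 2*t_j for 1 <= j, k <= ell+1 (every element of R occurs exactly once in this list). For 0 <= i <= f, let N_i be the delta x delta matrix over Z_4 whose first row is (1, r_{delta*i+1}) and whose j-th row is (0, r_{delta*i+j} - r_{delta*i+1}) for 2 <= j <= delta, elements of R written as coordinate vectors with respect to the basis 1, alpha, ..., alpha^{delta-2}. Then each N_i is invertible over Z_4 (hence lies in PAut(H_{0,delta})), and Phi({N_i^{-1} : 0 <= i <= f}) is an f-PD-set of size f+1 for the Z_4-linear Hadamard code Phi(H_{0,delta}) of length 2^{2*delta-1} with respect to the information set Phi(I_{0,delta}). -/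

import Mathlib

/-!
The quaternary linear Hadamard code `H_{γ,δ}` of length `β = 2^{γ+2δ-2}` and type
`2^γ 4^δ`.  Throughout we write `δ = e + 1` (so `e = δ - 1 ≥ 0`).  Coordinate
positions are indexed by the vectors `w = (1, v, 2y) ∈ {1} × Z_4^{δ-1} × {0,2}^γ`
(the columns of the generator matrix), which we identify with pairs
`q = (v, y) : (Fin e → ZMod 4) × (Fin γ → ZMod 2)`.
-/

/-- Position labels for `H_{γ,δ}` (with `δ = e+1`). -/
abbrev QPos (e γ : ℕ) := (Fin e → ZMod 4) × (Fin γ → ZMod 2)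

/-- Row/column index type for `(γ+δ) × (γ+δ)` matrices, split into the blocks
`1 | δ-1 | γ`. -/
abbrev QIdx (e γ : ℕ) := Unit ⊕ Fin e ⊕ Fin γ

/-- The vector `w = (1, v, 2y) ∈ Z_4^{γ+δ}` labelling the position `q = (v, y)`. -/
def wvec {e γ : ℕ} (q : QPos e γ) : QIdx e γ → ZMod 4 :=
  Sum.elim (fun _ => 1) (Sum.elim q.1 (fun j => 2 * ((q.2 j).val : ZMod 4)))

/-- The quaternary linear Hadamard code `H_{γ,δ}` (with `δ = e+1`): the codewords are
the vectors `(u · w)_w` for `u ∈ Z_4^{γ+δ}`. -/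
def qHad (e γ : ℕ) : Finset (QPos e γ → ZMod 4) :=
  Finset.univ.image fun u : QIdx e γ → ZMod 4 => fun q => ∑ i, u i * wvec q i

/-- The Gray map `φ : Z_4 → F_2^2`, `φ(0)=(0,0)`, `φ(1)=(0,1)`, `φ(2)=(1,1)`,
`φ(3)=(1,0)`; `gray y b` is the `b`-th bit (`b = 0` is the first bit, at the odd
binary position `2i-1`, and `b = 1` the second, at position `2i`). -/
def gray (y : ZMod 4) : Fin 2 → ZMod 2 := fun b =>
  if b = 0 then (if y = 2 ∨ y = 3 then 1 else 0) else (if y = 1 ∨ y = 2 then 1 else 0)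

/-- The extended Gray map `Φ : Z_4^β → F_2^{2β}`; the binary positions are pairs
`(quaternary position, bit)`. -/
def grayMap {β : Type*} (v : β → ZMod 4) : β × Fin 2 → ZMod 2 := fun p => gray (v p.1) p.2

/-- The quaternary information set
`I_{γ,δ} = {e₁, e₁+e₂, …, e₁+e_δ, e₁+2e_{δ+1}, …, e₁+2e_{γ+δ}}` in terms of the
position labels `q = (v, y)`. -/
def qInfo (e γ : ℕ) : Finset (QPos e γ) :=
  insert (0, 0)
    ((Finset.univ.image fun j : Fin e => ((Pi.single j 1 : Fin e → ZMod 4), 0)) ∪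
     (Finset.univ.image fun j : Fin γ => (0, (Pi.single j 1 : Fin γ → ZMod 2))))

/-- The binary information set `Φ(I_{γ,δ})` for the `Z_4`-linear Hadamard code
`Φ(H_{γ,δ})`: both Gray positions of each of the `δ` quaternary positions
`e₁, e₁+e₂, …, e₁+e_δ`, together with the first Gray position of each of the
remaining `γ` positions. -/
def binInfo (e γ : ℕ) : Finset (QPos e γ × Fin 2) :=
  ((insert (0, 0)
      (Finset.univ.image fun j : Fin e => ((Pi.single j 1 : Fin e → ZMod 4), 0)))
    ×ˢ (Finset.univ : Finset (Fin 2))) ∪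
  ((Finset.univ.image fun j : Fin γ =>
      ((0 : Fin e → ZMod 4), (Pi.single j 1 : Fin γ → ZMod 2))).image
    fun q => (q, (0 : Fin 2)))

/-- Membership in `PAut(H_{γ,δ}) = π(L)`: `M` has block form
`[[1, η, 2θ], [0, A, 2X], [0, ζ(Y), ζ(B)]]` with `A ∈ GL(δ-1, Z_4)`,
`B ∈ GL(γ, Z_4)` (equivalently, the `{0,1}`-matrix `ζ(B)` is invertible over `Z_4`),
and `ζ` reducing entries modulo 2 to `{0,1} ⊆ Z_4`. -/
def inPAutQ (e γ : ℕ) (M : Matrix (QIdx e γ) (QIdx e γ) (ZMod 4)) : Prop :=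
  -- first column is `e₁`
  (∀ i, M i (Sum.inl ()) = if i = Sum.inl () then 1 else 0) ∧
  -- `θ`-block entries lie in `2·Z_4`
  (∀ j : Fin γ, ∃ a, M (Sum.inl ()) (Sum.inr (Sum.inr j)) = 2 * a) ∧
  -- `A`-block is invertible
  IsUnit (Matrix.of fun i j : Fin e => M (Sum.inr (Sum.inl i)) (Sum.inr (Sum.inl j))) ∧
  -- `X`-block entries lie in `2·Z_4`
  (∀ (i : Fin e) (j : Fin γ), ∃ a, M (Sum.inr (Sum.inl i)) (Sum.inr (Sum.inr j)) = 2 * a) ∧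
  -- `ζ(Y)`-block entries lie in `{0,1}`
  (∀ (i : Fin γ) (j : Fin e), M (Sum.inr (Sum.inr i)) (Sum.inr (Sum.inl j)) = 0 ∨
    M (Sum.inr (Sum.inr i)) (Sum.inr (Sum.inl j)) = 1) ∧
  -- `ζ(B)`-block entries lie in `{0,1}` and `ζ(B)` is invertible
  (∀ (i j : Fin γ), M (Sum.inr (Sum.inr i)) (Sum.inr (Sum.inr j)) = 0 ∨
    M (Sum.inr (Sum.inr i)) (Sum.inr (Sum.inr j)) = 1) ∧
  IsUnit (Matrix.of fun i j : Fin γ => M (Sum.inr (Sum.inr i)) (Sum.inr (Sum.inr j)))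

/-- The action of `M ∈ PAut(H_{γ,δ})` on the quaternary coordinate positions:
`w ↦ w·M`, written in terms of the labels `q = (v, y)` (for `M ∈ PAut(H_{γ,δ})`,
the first coordinate of `w·M` is `1` and its last `γ` coordinates lie in `{0,2}`). -/
def qAct {e γ : ℕ} (M : Matrix (QIdx e γ) (QIdx e γ) (ZMod 4)) (q : QPos e γ) :
    QPos e γ :=
  (fun j => Matrix.vecMul (wvec q) M (Sum.inr (Sum.inl j)),
   fun j => if Matrix.vecMul (wvec q) M (Sum.inr (Sum.inr j)) = 2 then 1 else 0)

/-- The induced permutation `Φ(M)` of the binary coordinate positions. -/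
def bAct {e γ : ℕ} (M : Matrix (QIdx e γ) (QIdx e γ) (ZMod 4)) (p : QPos e γ × Fin 2) :
    QPos e γ × Fin 2 :=
  (qAct M p.1, p.2)

noncomputable section
open Polynomial
namespace PD
abbrev c2 : ZMod 4 →+* ZMod 2 := ZMod.castHom (show (2:ℕ) ∣ 4 by norm_num) (ZMod 2)
abbrev hbar (h : Polynomial (ZMod 4)) : Polynomial (ZMod 2) := h.map c2
abbrev Fb (h : Polynomial (ZMod 4)) := AdjoinRoot (hbar h)
variable (h : Polynomial (ZMod 4))
abbrev bet : Fb h := AdjoinRoot.root (hbar h)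

/-- mod 2 Teichmüller list -/
def tb (k : ℕ) : Fb h := if k = 0 then 0 else bet h ^ (k - 1)

variable {e : ℕ}

lemma two_pos : (0:ℕ) < 2 ^ e := Nat.pow_pos (by norm_num)

lemma bet_pow_card (hdvd2 : hbar h ∣ X ^ (2 ^ e - 1) - 1) :
    bet h ^ (2 ^ e - 1) = 1 := by
  have h0 := AdjoinRoot.mk_eq_zero.2 hdvd2
  have h1 : (AdjoinRoot.mk (hbar h)) (X ^ (2 ^ e - 1)) - AdjoinRoot.mk (hbar h) 1 = 0 := by
    rw [← map_sub]; exact h0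
  rw [map_pow, AdjoinRoot.mk_X, map_one] at h1
  linear_combination (norm := ring_nf) h1

lemma smalldeg (hmon : h.Monic) (hdeg : h.natDegree = e)
    {p : Polynomial (ZMod 2)} (hp : p.natDegree < e) (h0 : AdjoinRoot.mk (hbar h) p = 0) :
    p = 0 := by
  by_contra hne
  have hd : hbar h ∣ p := AdjoinRoot.mk_eq_zero.1 h0
  have := Polynomial.natDegree_le_of_dvd hd hne
  rw [hmon.natDegree_map, hdeg] at this
  omega

lemma eval_one_ne (hirr : Irreducible (hbar h)) (he : 2 ≤ e) (hmon : h.Monic)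
    (hdeg : h.natDegree = e) : (hbar h).eval 1 ≠ 0 := by
  intro h0
  have hdvd : (X - Polynomial.C 1) ∣ hbar h := Polynomial.dvd_iff_isRoot.2 h0
  obtain ⟨u, hu⟩ := hdvd
  rcases hirr.2 hu with hu1 | hu2
  · have := Polynomial.natDegree_eq_zero_of_isUnit hu1
    rw [Polynomial.natDegree_X_sub_C] at this; omega
  · have hdu := Polynomial.natDegree_eq_zero_of_isUnit hu2
    have : (hbar h).natDegree = 1 := by
      rw [hu, Polynomial.natDegree_mul (Polynomial.X_sub_C_ne_zero 1)
        (fun hz => by simp [hz] at hu2), Polynomial.natDegree_X_sub_C, hdu]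
    rw [hmon.natDegree_map, hdeg] at this; omega

lemma zmod2_eq_one {a : ZMod 2} (ha : a ≠ 0) : a = 1 := by
  revert ha; revert a; decide

/-- The key linear independence lemma. -/
lemma indep (he : 2 ≤ e) (hmon : h.Monic) (hdeg : h.natDegree = e)
    (hirr : Irreducible (hbar h)) (hdvd2 : hbar h ∣ X ^ (2 ^ e - 1) - 1)
    (n : ℕ) (c : Fin e → ZMod 2)
    (hc : ∑ k : Fin e, AdjoinRoot.of (hbar h) (c k) *
      (tb h ((n + (k : ℕ) + 1) % 2 ^ e) - tb h (n % 2 ^ e)) = 0) :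
    ∀ k, c k = 0 := by
  have h2e : e < 2 ^ e := Nat.lt_two_pow_self
  set k0 := n % 2 ^ e with hk0def
  have hk0lt : k0 < 2 ^ e := Nat.mod_lt _ two_pos
  have hmod : ∀ s : ℕ, (n + s) % 2 ^ e = (k0 + s) % 2 ^ e := by
    intro s
    conv_lhs => rw [Nat.add_mod]
    conv_rhs => rw [Nat.add_mod, Nat.mod_mod_of_dvd _ dvd_rfl]
  have hpow := bet_pow_card h (e := e) hdvd2
  by_cases hk0 : k0 = 0
  · -- case A
    have hceq : ∑ k : Fin e, AdjoinRoot.of (hbar h) (c k) * bet h ^ (k : ℕ) = 0 := by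
      rw [← hc]
      refine Finset.sum_congr rfl fun k _ => ?_
      congr 1
      refine Eq.symm ?_
      rw [Nat.add_assoc, hmod, hk0, Nat.zero_add,
        Nat.mod_eq_of_lt (by omega : (k:ℕ) + 1 < 2 ^ e)]
      rw [tb, tb, if_neg (by omega), if_pos rfl, sub_zero]
      exact congrArg (fun m => bet h ^ m) (by omega : (k:ℕ) + 1 - 1 = (k:ℕ))
    set p : Polynomial (ZMod 2) := ∑ k : Fin e, Polynomial.C (c k) * X ^ (k : ℕ) with hp
    have hmk : AdjoinRoot.mk (hbar h) p = 0 := by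
      rw [hp, map_sum, ← hceq]
      refine Finset.sum_congr rfl fun k _ => ?_
      rw [map_mul, map_pow, AdjoinRoot.mk_X, AdjoinRoot.mk_C]
    have hdp : p.natDegree < e := by
      have : p.natDegree ≤ e - 1 := by
        refine Polynomial.natDegree_sum_le_of_forall_le _ _ fun k _ => ?_
        refine le_trans (Polynomial.natDegree_C_mul_le _ _) ?_
        rw [Polynomial.natDegree_X_pow]; omega
      omega
    have hp0 : p = 0 := smalldeg h hmon hdeg hdp hmk
    intro k
    have : p.coeff (k : ℕ) = c k := by
      rw [hp, Polynomial.finset_sum_coeff]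
      rw [Finset.sum_eq_single k]
      · rw [Polynomial.coeff_C_mul, Polynomial.coeff_X_pow, if_pos rfl, mul_one]
      · intro k' _ hne
        rw [Polynomial.coeff_C_mul, Polynomial.coeff_X_pow,
          if_neg (fun hh => hne (Fin.ext hh.symm)), mul_zero]
      · intro hk; exact absurd (Finset.mem_univ k) hk
    rw [hp0, Polynomial.coeff_zero] at this
    exact this.symm
  · -- case k0 ≥ 1
    set w : Fb h := bet h ^ (2 ^ e - k0) with hw
    have htbk0 : tb h k0 * w = 1 := by
      rw [tb, if_neg hk0, hw, ← pow_add]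
      have : k0 - 1 + (2 ^ e - k0) = 2 ^ e - 1 := by omega
      rw [this, hpow]
    have hG : ∀ s : ℕ, 1 ≤ s → s ≤ e → tb h ((n + s) % 2 ^ e) * w =
        (if k0 + s < 2 ^ e then bet h ^ s else if k0 + s = 2 ^ e then 0 else bet h ^ (s - 1)) := by
      intro s hs1 hs2
      rw [hmod]
      rcases lt_trichotomy (k0 + s) (2 ^ e) with hlt | heq | hgt
      · rw [if_pos hlt, Nat.mod_eq_of_lt hlt, tb, if_neg (by omega), hw, ← pow_add]
        have : k0 + s - 1 + (2 ^ e - k0) = s + (2 ^ e - 1) := by omega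
        rw [this, pow_add, hpow, mul_one]
      · rw [if_neg (by omega), if_pos heq, ← heq, Nat.mod_self, tb, if_pos rfl, zero_mul]
      · rw [if_neg (by omega), if_neg (by omega)]
        have hm : (k0 + s) % 2 ^ e = k0 + s - 2 ^ e := by
          set m := k0 + s - 2 ^ e with hmdef
          rw [show k0 + s = m + 1 * 2 ^ e by omega, Nat.add_mul_mod_self_right,
            Nat.mod_eq_of_lt (by omega : m < 2 ^ e)]
        rw [hm, tb, if_neg (by omega), hw, ← pow_add]
        congr 1; omega
    have hc2 : ∑ k : Fin e, AdjoinRoot.of (hbar h) (c k) *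
        ((if k0 + ((k : ℕ) + 1) < 2 ^ e then bet h ^ ((k : ℕ) + 1)
          else if k0 + ((k : ℕ) + 1) = 2 ^ e then 0 else bet h ^ (k : ℕ)) - 1) = 0 := by
      have h' := congrArg (· * w) hc
      simp only [Finset.sum_mul, zero_mul] at h'
      refine Eq.trans ?_ h'
      refine Finset.sum_congr rfl fun k _ => ?_
      rw [mul_assoc, sub_mul, htbk0, Nat.add_assoc, hG ((k : ℕ) + 1) (by omega) (by omega)]
      norm_num
    set P : Polynomial (ZMod 2) := ∑ k : Fin e, Polynomial.C (c k) *
        ((if k0 + ((k : ℕ) + 1) < 2 ^ e then X ^ ((k : ℕ) + 1)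
          else if k0 + ((k : ℕ) + 1) = 2 ^ e then 0 else X ^ (k : ℕ)) - 1) with hP
    have hmkP : AdjoinRoot.mk (hbar h) P = 0 := by
      rw [hP, map_sum, ← hc2]
      refine Finset.sum_congr rfl fun k _ => ?_
      rw [map_mul, AdjoinRoot.mk_C, map_sub, map_one]
      congr 2
      split_ifs with h1 h2
      · rw [map_pow, AdjoinRoot.mk_X]
      · rw [map_zero]
      · rw [map_pow, AdjoinRoot.mk_X]
    have hdvdP : hbar h ∣ P := AdjoinRoot.mk_eq_zero.1 hmkP
    by_cases hbig : k0 + e < 2 ^ e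
    · -- no wrap
      have hPdeg : P.natDegree ≤ e := by
        rw [hP]
        refine Polynomial.natDegree_sum_le_of_forall_le _ _ fun k _ => ?_
        refine le_trans (Polynomial.natDegree_C_mul_le _ _) ?_
        refine le_trans (Polynomial.natDegree_sub_le _ _) ?_
        rw [Polynomial.natDegree_one]
        refine max_le ?_ (by omega)
        split_ifs with h1 h2
        · rw [Polynomial.natDegree_X_pow]; omega
        · rw [Polynomial.natDegree_zero]; omega
        · rw [Polynomial.natDegree_X_pow]; omega
      have hP0 : P = 0 := by
        by_contra hne
        have hge : e ≤ P.natDegree := by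
          have := Polynomial.natDegree_le_of_dvd hdvdP hne
          rwa [hmon.natDegree_map, hdeg] at this
        obtain ⟨u, hu⟩ := hdvdP
        have hu0 : u ≠ 0 := fun h0 => hne (by rw [hu, h0, mul_zero])
        have hbar0 : hbar h ≠ 0 := (hmon.map c2).ne_zero
        have hdegu : u.natDegree = 0 := by
          have h3 := Polynomial.natDegree_mul hbar0 hu0
          rw [← hu, hmon.natDegree_map, hdeg] at h3
          omega
        have hu1 : u = Polynomial.C (u.coeff 0) := Polynomial.eq_C_of_natDegree_eq_zero hdegu
        have hcne : u.coeff 0 ≠ 0 := fun hh => hu0 (by rw [hu1, hh, map_zero])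
        have hu2 : u = 1 := by rw [hu1, zmod2_eq_one hcne, map_one]
        rw [hu2, mul_one] at hu
        have hev : P.eval 1 = 0 := by
          rw [hP, Polynomial.eval_finset_sum]
          refine Finset.sum_eq_zero fun k _ => ?_
          rw [Polynomial.eval_mul, Polynomial.eval_sub, Polynomial.eval_one,
            if_pos (show k0 + ((k : ℕ) + 1) < 2 ^ e by omega), Polynomial.eval_pow,
            Polynomial.eval_X, one_pow, sub_self, mul_zero]
        rw [hu] at hev
        exact eval_one_ne h hirr he hmon hdeg hev
      intro k
      have hck : P.coeff ((k : ℕ) + 1) = c k := by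
        rw [hP, Polynomial.finset_sum_coeff, Finset.sum_eq_single k]
        · rw [Polynomial.coeff_C_mul, if_pos (by omega), Polynomial.coeff_sub,
            Polynomial.coeff_X_pow, if_pos rfl, Polynomial.coeff_one, if_neg (by omega),
            sub_zero, mul_one]
        · intro k' _ hne
          rw [Polynomial.coeff_C_mul, if_pos (by omega), Polynomial.coeff_sub,
            Polynomial.coeff_X_pow, if_neg (fun hh => hne (Fin.ext (by omega))),
            Polynomial.coeff_one, if_neg (by omega), sub_zero, mul_zero]
        · exact fun hk => absurd (Finset.mem_univ k) hk
      rw [hP0, Polynomial.coeff_zero] at hck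
      exact hck.symm
    · -- wrap case
      push_neg at hbig
      have hPdeg : P.natDegree < e := by
        have hle : P.natDegree ≤ e - 1 := by
          rw [hP]
          refine Polynomial.natDegree_sum_le_of_forall_le _ _ fun k _ => ?_
          refine le_trans (Polynomial.natDegree_C_mul_le _ _) ?_
          refine le_trans (Polynomial.natDegree_sub_le _ _) ?_
          rw [Polynomial.natDegree_one]
          refine max_le ?_ (by omega)
          split_ifs with h1 h2
          · rw [Polynomial.natDegree_X_pow]; omega
          · rw [Polynomial.natDegree_zero]; omega
          · rw [Polynomial.natDegree_X_pow]; omega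
        omega
      have hP0 : P = 0 := smalldeg h hmon hdeg hPdeg hmkP
      have hnex : ∀ k : Fin e, k0 + ((k : ℕ) + 1) ≠ 2 ^ e → c k = 0 := by
        intro k hkx
        by_cases h1 : k0 + ((k : ℕ) + 1) < 2 ^ e
        · have hck : P.coeff ((k : ℕ) + 1) = c k := by
            rw [hP, Polynomial.finset_sum_coeff, Finset.sum_eq_single k]
            · rw [Polynomial.coeff_C_mul, if_pos h1, Polynomial.coeff_sub,
                Polynomial.coeff_X_pow, if_pos rfl, Polynomial.coeff_one, if_neg (by omega),
                sub_zero, mul_one]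
            · intro k' _ hne
              have hvne : (k' : ℕ) ≠ (k : ℕ) := fun hh => hne (Fin.ext hh)
              rw [Polynomial.coeff_C_mul, Polynomial.coeff_sub, Polynomial.coeff_one,
                if_neg (by omega : ¬((k : ℕ) + 1 = 0)), sub_zero]
              split_ifs with h1' h2'
              · rw [Polynomial.coeff_X_pow, if_neg (by omega), mul_zero]
              · rw [Polynomial.coeff_zero, mul_zero]
              · rw [Polynomial.coeff_X_pow, if_neg (by omega), mul_zero]
            · exact fun hk => absurd (Finset.mem_univ k) hk
          rw [hP0, Polynomial.coeff_zero] at hck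
          exact hck.symm
        · have hk1 : 1 ≤ (k : ℕ) := by omega
          have hck : P.coeff (k : ℕ) = c k := by
            rw [hP, Polynomial.finset_sum_coeff, Finset.sum_eq_single k]
            · rw [Polynomial.coeff_C_mul, if_neg h1, if_neg hkx, Polynomial.coeff_sub,
                Polynomial.coeff_X_pow, if_pos rfl, Polynomial.coeff_one, if_neg (by omega),
                sub_zero, mul_one]
            · intro k' _ hne
              have hvne : (k' : ℕ) ≠ (k : ℕ) := fun hh => hne (Fin.ext hh)
              rw [Polynomial.coeff_C_mul, Polynomial.coeff_sub, Polynomial.coeff_one,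
                if_neg (by omega : ¬((k : ℕ) = 0)), sub_zero]
              split_ifs with h1' h2'
              · rw [Polynomial.coeff_X_pow, if_neg (by omega), mul_zero]
              · rw [Polynomial.coeff_zero, mul_zero]
              · rw [Polynomial.coeff_X_pow, if_neg (by omega), mul_zero]
            · exact fun hk => absurd (Finset.mem_univ k) hk
          rw [hP0, Polynomial.coeff_zero] at hck
          exact hck.symm
      intro k
      by_cases hkx : k0 + ((k : ℕ) + 1) = 2 ^ e
      · have hck : P.coeff 0 = - c k := by
          rw [hP, Polynomial.finset_sum_coeff, Finset.sum_eq_single k]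
          · rw [Polynomial.coeff_C_mul, if_neg (by omega), if_pos hkx, Polynomial.coeff_sub,
              Polynomial.coeff_zero, Polynomial.coeff_one, if_pos rfl, zero_sub, mul_neg_one]
          · intro k' _ hne
            have hvne : (k' : ℕ) ≠ (k : ℕ) := fun hh => hne (Fin.ext hh)
            rw [hnex k' (by omega), map_zero, zero_mul, Polynomial.coeff_zero]
          · exact fun hk => absurd (Finset.mem_univ k) hk
        rw [hP0, Polynomial.coeff_zero] at hck
        exact (neg_eq_zero.1 hck.symm)
      · exact hnex k hkx

def phi (h : Polynomial (ZMod 4)) : AdjoinRoot h →+* Fb h :=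
  AdjoinRoot.lift ((AdjoinRoot.of (hbar h)).comp c2) (AdjoinRoot.root (hbar h)) (by
    rw [← Polynomial.eval₂_map]; exact AdjoinRoot.eval₂_root _)

lemma phi_root : phi h (AdjoinRoot.root h) = bet h := AdjoinRoot.lift_root _

lemma phi_two : phi h 2 = 0 := by
  have h2 : (2 : AdjoinRoot h) = AdjoinRoot.of h 2 := (map_ofNat (AdjoinRoot.of h) 2).symm
  rw [h2, show phi h (AdjoinRoot.of h 2) = AdjoinRoot.of (hbar h) (c2 2) from
    AdjoinRoot.lift_of _]
  have hz : c2 2 = 0 := by decide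
  rw [hz, map_zero]

lemma phi_repr (b : Module.Basis (Fin e) (ZMod 4) (AdjoinRoot h))
    (hb : ∀ j : Fin e, b j = AdjoinRoot.root h ^ (j : ℕ)) (x : AdjoinRoot h) :
    phi h x = ∑ j : Fin e, AdjoinRoot.of (hbar h) (c2 (b.repr x j)) * bet h ^ (j : ℕ) := by
  conv_lhs => rw [← b.sum_repr x]
  rw [map_sum]
  refine Finset.sum_congr rfl fun j _ => ?_
  rw [hb j, Algebra.smul_def, AdjoinRoot.algebraMap_eq, map_mul, map_pow]
  rw [show phi h (AdjoinRoot.of h (b.repr x j)) = AdjoinRoot.of (hbar h) (c2 (b.repr x j))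
    from AdjoinRoot.lift_of _]
  rw [show phi h (AdjoinRoot.root h) = bet h from AdjoinRoot.lift_root _]

lemma bet_ne_zero (hirr : Irreducible (hbar h)) (he : 1 ≤ e)
    (hdvd2 : hbar h ∣ X ^ (2 ^ e - 1) - 1) : bet h ≠ 0 := by
  haveI : Fact (Irreducible (hbar h)) := ⟨hirr⟩
  have h1 : 1 ≤ 2 ^ e - 1 := by have := Nat.one_lt_two_pow_iff.2 (by omega : e ≠ 0); omega
  have hu : IsUnit (bet h) := by
    refine IsUnit.of_mul_eq_one (bet h ^ (2 ^ e - 1 - 1)) ?_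
    rw [← pow_succ']
    rw [show 2 ^ e - 1 - 1 + 1 = 2 ^ e - 1 by omega]
    exact bet_pow_card h hdvd2
  exact hu.ne_zero

lemma bet_pow_ne (hmin2 : ∀ k, 0 < k → k < 2 ^ e - 1 → ¬ hbar h ∣ X ^ k - 1)
    {k : ℕ} (h1 : 0 < k) (h2 : k < 2 ^ e - 1) : bet h ^ k ≠ 1 := by
  intro hk
  refine hmin2 k h1 h2 (AdjoinRoot.mk_eq_zero.1 ?_)
  rw [map_sub, map_pow, AdjoinRoot.mk_X, map_one, hk, sub_self]

lemma bet_pow_inj (hirr : Irreducible (hbar h)) (he : 1 ≤ e)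
    (hdvd2 : hbar h ∣ X ^ (2 ^ e - 1) - 1)
    (hmin2 : ∀ k, 0 < k → k < 2 ^ e - 1 → ¬ hbar h ∣ X ^ k - 1)
    {a b : ℕ} (ha : a < 2 ^ e - 1) (hb : b < 2 ^ e - 1)
    (hab : bet h ^ a = bet h ^ b) : a = b := by
  haveI : Fact (Irreducible (hbar h)) := ⟨hirr⟩
  have hne := bet_ne_zero h hirr he hdvd2
  have key : ∀ a b : ℕ, a ≤ b → b < 2 ^ e - 1 → bet h ^ a = bet h ^ b → a = b := by
    intro a b hle hblt heq
    have h1 : bet h ^ a * bet h ^ (b - a) = bet h ^ a * 1 := by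
      rw [← pow_add, mul_one, show a + (b - a) = b by omega, heq]
    have h2 : bet h ^ (b - a) = 1 := mul_left_cancel₀ (pow_ne_zero _ hne) h1
    by_contra hab'
    exact bet_pow_ne h hmin2 (by omega) (by omega) h2
  rcases le_total a b with hle | hle
  · exact key a b hle hb hab
  · exact (key b a hle ha hab.symm).symm

lemma tb_inj (hirr : Irreducible (hbar h)) (he : 1 ≤ e)
    (hdvd2 : hbar h ∣ X ^ (2 ^ e - 1) - 1)
    (hmin2 : ∀ k, 0 < k → k < 2 ^ e - 1 → ¬ hbar h ∣ X ^ k - 1)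
    {a b : ℕ} (ha : a < 2 ^ e) (hb : b < 2 ^ e)
    (hab : tb h a = tb h b) : a = b := by
  haveI : Fact (Irreducible (hbar h)) := ⟨hirr⟩
  have hne := bet_ne_zero h hirr he hdvd2
  rw [tb, tb] at hab
  split_ifs at hab with h1 h2 h2
  · omega
  · exact absurd hab.symm (pow_ne_zero _ hne)
  · exact absurd hab (pow_ne_zero _ hne)
  · have := bet_pow_inj h hirr he hdvd2 hmin2 (by omega : a - 1 < 2 ^ e - 1)
      (by omega : b - 1 < 2 ^ e - 1) hab
    omega

lemma two_smul' (x : AdjoinRoot h) : (2 : ZMod 4) • x = 2 * x := by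
  rw [Algebra.smul_def, AdjoinRoot.algebraMap_eq, map_ofNat]

lemma exists_two (b : Module.Basis (Fin e) (ZMod 4) (AdjoinRoot h))
    (x : AdjoinRoot h) (hx : 2 * x = 0) : ∃ y, x = 2 * y := by
  have hco : ∀ j : Fin e, ∃ d, b.repr x j = 2 * d := by
    intro j
    have h1 : (2 : ZMod 4) • x = 0 := by rw [two_smul' h x]; exact hx
    have h2 : (2 : ZMod 4) * b.repr x j = 0 := by
      have := congrArg (fun z => b.repr z j) h1
      simpa [map_smul] using this
    revert h2
    generalize b.repr x j = a
    revert a; decide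
  choose d hd using hco
  refine ⟨∑ j, d j • b j, ?_⟩
  rw [Finset.mul_sum]
  conv_lhs => rw [← b.sum_repr x]
  refine Finset.sum_congr rfl fun j _ => ?_
  rw [hd j, ← two_smul' h (d j • b j), smul_smul]

lemma phi_of_two_mul (y : AdjoinRoot h) : phi h (2 * y) = 0 := by
  rw [map_mul, phi_two, zero_mul]

lemma phi_t (t : ℕ → AdjoinRoot h)
    (ht : ∀ k, t k = if k = 0 then 0 else AdjoinRoot.root h ^ (k - 1)) (k : ℕ) :
    phi h (t k) = tb h k := by
  rw [ht, tb]
  split_ifs with h1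
  · rw [map_zero]
  · rw [map_pow, phi_root]

lemma phi_r (t : ℕ → AdjoinRoot h)
    (ht : ∀ k, t k = if k = 0 then 0 else AdjoinRoot.root h ^ (k - 1))
    (r : ℕ → AdjoinRoot h) (hr : ∀ n, r n = t (n % 2 ^ e) + 2 * t (n / 2 ^ e)) (n : ℕ) :
    phi h (r n) = tb h (n % 2 ^ e) := by
  rw [hr, map_add, phi_of_two_mul, add_zero, phi_t h t ht]

lemma r_inj (hirr : Irreducible (hbar h)) (he : 1 ≤ e)
    (hdvd2 : hbar h ∣ X ^ (2 ^ e - 1) - 1)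
    (hmin2 : ∀ k, 0 < k → k < 2 ^ e - 1 → ¬ hbar h ∣ X ^ k - 1)
    (b : Module.Basis (Fin e) (ZMod 4) (AdjoinRoot h))
    (t : ℕ → AdjoinRoot h)
    (ht : ∀ k, t k = if k = 0 then 0 else AdjoinRoot.root h ^ (k - 1))
    (r : ℕ → AdjoinRoot h) (hr : ∀ n, r n = t (n % 2 ^ e) + 2 * t (n / 2 ^ e))
    {m m' : ℕ} (hm : m < 2 ^ e * 2 ^ e) (hm' : m' < 2 ^ e * 2 ^ e)
    (heq : r m = r m') : m = m' := by
  have heq' : t (m % 2 ^ e) + 2 * t (m / 2 ^ e) = t (m' % 2 ^ e) + 2 * t (m' / 2 ^ e) := by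
    rw [← hr, ← hr, heq]
  have hmodeq : m % 2 ^ e = m' % 2 ^ e := by
    have hd : t (m % 2 ^ e) - t (m' % 2 ^ e) = 2 * (t (m' / 2 ^ e) - t (m / 2 ^ e)) := by
      linear_combination heq'
    have hphi : phi h (t (m % 2 ^ e)) = phi h (t (m' % 2 ^ e)) := by
      have h0 : phi h (t (m % 2 ^ e) - t (m' % 2 ^ e)) = 0 := by
        rw [hd]; exact phi_of_two_mul h _
      rw [map_sub, sub_eq_zero] at h0; exact h0
    rw [phi_t h t ht, phi_t h t ht] at hphi
    exact tb_inj h hirr he hdvd2 hmin2 (Nat.mod_lt _ two_pos) (Nat.mod_lt _ two_pos) hphi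
  have hdiveq : m / 2 ^ e = m' / 2 ^ e := by
    rw [hmodeq] at heq'
    have h2 : 2 * (t (m / 2 ^ e) - t (m' / 2 ^ e)) = 0 := by linear_combination heq'
    obtain ⟨y, hy⟩ := exists_two h b _ h2
    have hphi : phi h (t (m / 2 ^ e)) = phi h (t (m' / 2 ^ e)) := by
      have h0 : phi h (t (m / 2 ^ e) - t (m' / 2 ^ e)) = 0 := by
        rw [hy]; exact phi_of_two_mul h _
      rw [map_sub, sub_eq_zero] at h0; exact h0
    rw [phi_t h t ht, phi_t h t ht] at hphi
    refine tb_inj h hirr he hdvd2 hmin2 ?_ ?_ hphi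
    · exact Nat.div_lt_of_lt_mul hm
    · exact Nat.div_lt_of_lt_mul hm'
  have e1 := Nat.div_add_mod m (2 ^ e)
  have e2 := Nat.div_add_mod m' (2 ^ e)
  rw [hmodeq, hdiveq] at e1
  omega

lemma c2_one : c2 1 = 1 := by decide
lemma c2_zero : c2 0 = 0 := by decide

lemma c2_one' : (ZMod.cast (1 : ZMod 4) : ZMod 2) = 1 := by decide
lemma c2_zero' : (ZMod.cast (0 : ZMod 4) : ZMod 2) = 0 := by decide

lemma zmod4_sq (x : ZMod 4) (hx : c2 x ≠ 0) : x * x = 1 := by revert hx; revert x; decide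

lemma isUnit_of_map {ι : Type} [Fintype ι] [DecidableEq ι]
    (M : Matrix ι ι (ZMod 4)) (hd : (M.map c2).det ≠ 0) : IsUnit M := by
  rw [show (M.map ⇑c2) = c2.mapMatrix M from (RingHom.mapMatrix_apply _ _).symm,
    ← RingHom.map_det] at hd
  exact (Matrix.isUnit_iff_isUnit_det M).2 (IsUnit.of_mul_eq_one _ (zmod4_sq _ hd))

lemma det_ne_of_ker {ι : Type} [Fintype ι] [DecidableEq ι]
    (M : Matrix ι ι (ZMod 2)) (hker : ∀ v, Matrix.vecMul v M = 0 → v = 0) :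
    M.det ≠ 0 := by
  intro hd
  obtain ⟨v, hv, h0⟩ := Matrix.exists_vecMul_eq_zero_iff.2 hd
  exact hv (hker v h0)

section Main

variable (he2 : 2 ≤ e) (hmon : h.Monic) (hdeg : h.natDegree = e)
  (hirr : Irreducible (hbar h)) (hdvd2 : hbar h ∣ X ^ (2 ^ e - 1) - 1)
  (b : Module.Basis (Fin e) (ZMod 4) (AdjoinRoot h))
  (hb : ∀ j : Fin e, b j = AdjoinRoot.root h ^ (j : ℕ))
  (t : ℕ → AdjoinRoot h)
  (ht : ∀ k, t k = if k = 0 then 0 else AdjoinRoot.root h ^ (k - 1))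
  (r : ℕ → AdjoinRoot h) (hr : ∀ n, r n = t (n % 2 ^ e) + 2 * t (n / 2 ^ e))

include he2 hmon hdeg hirr hdvd2 hb ht hr in
lemma ablock_ker (n : ℕ) (v : Fin e → ZMod 2)
    (hv : ∀ j : Fin e, ∑ k : Fin e, v k * c2 (b.repr (r (n + (k : ℕ) + 1) - r n) j) = 0) :
    v = 0 := by
  have hsum : ∑ k : Fin e, AdjoinRoot.of (hbar h) (v k) *
      (tb h ((n + (k : ℕ) + 1) % 2 ^ e) - tb h (n % 2 ^ e)) = 0 := by
    have step1 : ∀ k : Fin e,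
        tb h ((n + (k : ℕ) + 1) % 2 ^ e) - tb h (n % 2 ^ e) =
        phi h (r (n + (k : ℕ) + 1) - r n) := by
      intro k
      rw [map_sub, phi_r h t ht r hr, phi_r h t ht r hr]
    calc ∑ k : Fin e, AdjoinRoot.of (hbar h) (v k) *
          (tb h ((n + (k : ℕ) + 1) % 2 ^ e) - tb h (n % 2 ^ e))
        = ∑ k : Fin e, ∑ j : Fin e,
            AdjoinRoot.of (hbar h) (v k * c2 (b.repr (r (n + (k : ℕ) + 1) - r n) j)) *
              bet h ^ (j : ℕ) := by
          refine Finset.sum_congr rfl fun k _ => ?_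
          rw [step1 k, phi_repr h b hb, Finset.mul_sum]
          refine Finset.sum_congr rfl fun j _ => ?_
          rw [map_mul, mul_assoc]
      _ = ∑ j : Fin e, AdjoinRoot.of (hbar h)
            (∑ k : Fin e, v k * c2 (b.repr (r (n + (k : ℕ) + 1) - r n) j)) *
              bet h ^ (j : ℕ) := by
          rw [Finset.sum_comm]
          refine Finset.sum_congr rfl fun j _ => ?_
          rw [map_sum, Finset.sum_mul]
      _ = 0 := by
          refine Finset.sum_eq_zero fun j _ => ?_
          rw [hv j, map_zero, zero_mul]
  funext k
  exact indep h he2 hmon hdeg hirr hdvd2 n v hsum k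

variable (N : ℕ → Matrix (QIdx e 0) (QIdx e 0) (ZMod 4))
  (hN1 : ∀ i, N i (Sum.inl ()) (Sum.inl ()) = 1)
  (hN2 : ∀ i (j : Fin e), N i (Sum.inl ()) (Sum.inr (Sum.inl j)) =
    b.repr (r ((e + 1) * i)) j)
  (hN3 : ∀ i (k : Fin e), N i (Sum.inr (Sum.inl k)) (Sum.inl ()) = 0)
  (hN4 : ∀ i (k j : Fin e), N i (Sum.inr (Sum.inl k)) (Sum.inr (Sum.inl j)) =
    b.repr (r ((e + 1) * i + (k : ℕ) + 1) - r ((e + 1) * i)) j)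

include he2 hmon hdeg hirr hdvd2 hb ht hr hN4 in
lemma ablock_unit (i : ℕ) : IsUnit (Matrix.of fun k j : Fin e =>
    N i (Sum.inr (Sum.inl k)) (Sum.inr (Sum.inl j))) := by
  refine isUnit_of_map _ (det_ne_of_ker _ fun v hv => ?_)
  refine ablock_ker h he2 hmon hdeg hirr hdvd2 b hb t ht r hr ((e + 1) * i) v fun j => ?_
  have hcol := congrFun hv j
  simpa [Matrix.vecMul, dotProduct, Matrix.map_apply, Matrix.of_apply, hN4 i]
    using hcol

include he2 hmon hdeg hirr hdvd2 hb ht hr hN1 hN3 hN4 in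
lemma N_unit (i : ℕ) : IsUnit (N i) := by
  refine isUnit_of_map _ (det_ne_of_ker _ fun v hv => ?_)
  have h0 : v (Sum.inl ()) = 0 := by
    have hcol := congrFun hv (Sum.inl ())
    simpa [Matrix.vecMul, dotProduct, Matrix.map_apply, Fintype.sum_sum_type,
      hN1 i, hN3 i, c2_one, c2_zero, c2_one', c2_zero'] using hcol
  have h1 : (fun k => v (Sum.inr (Sum.inl k))) = 0 := by
    refine ablock_ker h he2 hmon hdeg hirr hdvd2 b hb t ht r hr ((e + 1) * i) _ fun j => ?_
    have hcol := congrFun hv (Sum.inr (Sum.inl j))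
    simpa [Matrix.vecMul, dotProduct, Matrix.map_apply, Fintype.sum_sum_type,
      h0, hN4 i] using hcol
  funext idx
  match idx with
  | Sum.inl () => exact h0
  | Sum.inr (Sum.inl k) => exact congrFun h1 k
  | Sum.inr (Sum.inr g) => exact g.elim0

include hN1 hN3 in
lemma N_first_col (i : ℕ) :
    ∀ idx, N i idx (Sum.inl ()) = if idx = Sum.inl () then 1 else 0 := by
  intro idx
  match idx with
  | Sum.inl () => rw [if_pos rfl]; exact hN1 i
  | Sum.inr (Sum.inl k) => rw [if_neg (by simp)]; exact hN3 i k
  | Sum.inr (Sum.inr g) => exact g.elim0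

include he2 hmon hdeg hirr hdvd2 hb ht hr hN1 hN2 hN3 hN4 in
lemma N_inPAut (i : ℕ) : inPAutQ e 0 (N i) := by
  refine ⟨N_first_col N hN1 hN3 i, fun j => j.elim0, ?_, fun k j => j.elim0,
    fun g => g.elim0, fun g => g.elim0, ?_⟩
  · exact ablock_unit h he2 hmon hdeg hirr hdvd2 b hb t ht r hr N hN4 i
  · refine (Matrix.isUnit_iff_isUnit_det _).2 ?_
    rw [Matrix.det_isEmpty]
    exact isUnit_one

include he2 hmon hdeg hirr hdvd2 hb ht hr hN1 hN3 hN4 in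
lemma inv_mul_N (i : ℕ) : (N i)⁻¹ * N i = 1 :=
  Matrix.nonsing_inv_mul (N i) ((Matrix.isUnit_iff_isUnit_det _).1
    (N_unit h he2 hmon hdeg hirr hdvd2 b hb t ht r hr N hN1 hN3 hN4 i))

include he2 hmon hdeg hirr hdvd2 hb ht hr hN1 hN3 hN4 in
lemma inv_first_col (i : ℕ) :
    ∀ idx, (N i)⁻¹ idx (Sum.inl ()) = if idx = Sum.inl () then 1 else 0 := by
  intro idx
  have hmul := inv_mul_N h he2 hmon hdeg hirr hdvd2 b hb t ht r hr N hN1 hN3 hN4 i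
  have hcol := congrFun (congrFun hmul idx) (Sum.inl ())
  rw [Matrix.mul_apply] at hcol
  rw [← Matrix.one_apply]
  rw [← hcol]
  rw [Fintype.sum_sum_type]
  have hz : ∀ x : Fin e ⊕ Fin 0, (N i)⁻¹ idx (Sum.inr x) * N i (Sum.inr x) (Sum.inl ()) = 0 := by
    intro x
    match x with
    | Sum.inl k => rw [hN3 i k, mul_zero]
    | Sum.inr g => exact g.elim0
  rw [Finset.sum_eq_zero fun x _ => hz x, add_zero]
  simp [hN1 i]

include he2 hmon hdeg hirr hdvd2 hb ht hr hN1 hN3 hN4 in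
lemma vecMul_inv_N (i : ℕ) (w : QIdx e 0 → ZMod 4) :
    Matrix.vecMul (Matrix.vecMul w (N i)⁻¹) (N i) = w := by
  rw [Matrix.vecMul_vecMul, inv_mul_N h he2 hmon hdeg hirr hdvd2 b hb t ht r hr N hN1 hN3 hN4 i,
    Matrix.vecMul_one]

include he2 hmon hdeg hirr hdvd2 hb ht hr hN1 hN3 hN4 in
lemma wvec_qAct (i : ℕ) (q : QPos e 0) :
    wvec (qAct (N i)⁻¹ q) = Matrix.vecMul (wvec q) (N i)⁻¹ := by
  funext idx
  match idx with
  | Sum.inl () =>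
    show (1 : ZMod 4) = _
    have hfc := inv_first_col h he2 hmon hdeg hirr hdvd2 b hb t ht r hr N hN1 hN3 hN4 i
    simp [Matrix.vecMul, dotProduct, Fintype.sum_sum_type, hfc, wvec]
  | Sum.inr (Sum.inl j) => rfl
  | Sum.inr (Sum.inr g) => exact g.elim0

include hN2 in
lemma vecMul_zero_row (i : ℕ) (j : Fin e) :
    Matrix.vecMul (wvec ((0, 0) : QPos e 0)) (N i) (Sum.inr (Sum.inl j)) =
      b.repr (r ((e + 1) * i)) j := by
  simp [Matrix.vecMul, dotProduct, Fintype.sum_sum_type, wvec, hN2 i j]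

include hN2 hN4 in
lemma vecMul_single_row (i : ℕ) (j0 j : Fin e) :
    Matrix.vecMul (wvec ((Pi.single j0 1, 0) : QPos e 0)) (N i) (Sum.inr (Sum.inl j)) =
      b.repr (r ((e + 1) * i + (j0 : ℕ) + 1)) j := by
  simp only [Matrix.vecMul, dotProduct, Fintype.sum_sum_type, wvec, Sum.elim_inl,
    Sum.elim_inr, Finset.univ_unique, Finset.sum_const, Finset.univ_eq_empty,
    Finset.sum_empty, add_zero, smul_eq_mul, one_mul, Pi.single_apply]
  simp only [ite_mul, one_mul, zero_mul]
  rw [Finset.sum_ite_eq' Finset.univ j0 (fun k => N i (Sum.inr (Sum.inl k))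
    (Sum.inr (Sum.inl j)))]
  simp only [Finset.mem_univ, if_pos, Finset.sum_const, Finset.card_singleton, one_smul]
  have hsing : ∑ x ∈ {default}, N i (Sum.inl x) (Sum.inr (Sum.inl j)) =
      N i (Sum.inl ()) (Sum.inr (Sum.inl j)) := Finset.sum_singleton _ _
  rw [hsing, hN2 i j, hN4 i j0 j, map_sub, Finsupp.sub_apply]
  ring

include he2 hmon hdeg hirr hdvd2 hb ht hr hN1 hN2 hN3 hN4 in
lemma bad_block (i : ℕ) (p : QPos e 0 × Fin 2)
    (hbad : bAct (N i)⁻¹ p ∈ binInfo e 0) :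
    ∃ k ≤ e, ∀ j : Fin e, p.1.1 j = b.repr (r ((e + 1) * i + k)) j := by
  have hmem : qAct (N i)⁻¹ p.1 ∈ insert ((0 : Fin e → ZMod 4), (0 : Fin 0 → ZMod 2))
      (Finset.univ.image fun j : Fin e =>
        ((Pi.single j 1 : Fin e → ZMod 4), (0 : Fin 0 → ZMod 2))) := by
    have := hbad
    simp only [binInfo, bAct, Finset.univ_eq_empty, Finset.image_empty, Finset.union_empty,
      Finset.mem_product, Finset.mem_univ, and_true] at this
    exact this
  have hw : wvec (qAct (N i)⁻¹ p.1) = Matrix.vecMul (wvec p.1) (N i)⁻¹ :=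
    wvec_qAct h he2 hmon hdeg hirr hdvd2 b hb t ht r hr N hN1 hN3 hN4 i p.1
  have hback : Matrix.vecMul (wvec (qAct (N i)⁻¹ p.1)) (N i) = wvec p.1 := by
    rw [hw, vecMul_inv_N h he2 hmon hdeg hirr hdvd2 b hb t ht r hr N hN1 hN3 hN4 i]
  rcases Finset.mem_insert.1 hmem with hq0 | hq1
  · refine ⟨0, by omega, fun j => ?_⟩
    have hcomp := congrFun hback (Sum.inr (Sum.inl j))
    rw [hq0, vecMul_zero_row h b r N hN2 i j] at hcomp
    rw [Nat.add_zero]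
    exact hcomp.symm
  · obtain ⟨j0, _, hj0⟩ := Finset.mem_image.1 hq1
    refine ⟨(j0 : ℕ) + 1, by omega, fun j => ?_⟩
    have hcomp := congrFun hback (Sum.inr (Sum.inl j))
    rw [← hj0, vecMul_single_row h b r N hN2 hN4 i j0 j] at hcomp
    rw [← Nat.add_assoc]
    exact hcomp.symm

omit hmon hdeg hirr hdvd2 hb ht hr in
include he2 in
lemma block_lt (i k : ℕ) (hi : i ≤ (2 ^ (2 * e) - (e + 1)) / (e + 1)) (hk : k ≤ e) :
    (e + 1) * i + k < 2 ^ e * 2 ^ e := by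
  have h1 : (e + 1) * i ≤ (e + 1) * ((2 ^ (2 * e) - (e + 1)) / (e + 1)) :=
    Nat.mul_le_mul_left _ hi
  have h2 : (2 ^ (2 * e) - (e + 1)) / (e + 1) * (e + 1) ≤ 2 ^ (2 * e) - (e + 1) :=
    Nat.div_mul_le_self _ _
  have h3 : (e + 1) * ((2 ^ (2 * e) - (e + 1)) / (e + 1)) =
      (2 ^ (2 * e) - (e + 1)) / (e + 1) * (e + 1) := Nat.mul_comm _ _
  have h4 : e + 1 ≤ 2 ^ (2 * e) :=
    le_trans (Nat.lt_two_pow_self) (Nat.pow_le_pow_right (by norm_num) (by omega))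
  have h5 : 2 ^ (2 * e) = 2 ^ e * 2 ^ e := by rw [two_mul, pow_add]
  omega

lemma block_eq {i j k k' : ℕ} (hk : k ≤ e) (hk' : k' ≤ e)
    (heq : (e + 1) * i + k = (e + 1) * j + k') : i = j := by
  have h1 : ((e + 1) * i + k) / (e + 1) = i := by
    rw [Nat.mul_add_div (by omega), Nat.div_eq_of_lt (by omega), Nat.add_zero]
  have h2 : ((e + 1) * j + k') / (e + 1) = j := by
    rw [Nat.mul_add_div (by omega), Nat.div_eq_of_lt (by omega), Nat.add_zero]
  rw [← h1, ← h2, heq]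

include he2 hmon hdeg hirr hdvd2 hb ht hr hN1 hN2 hN3 hN4 in
lemma bad_unique (hmin2 : ∀ k, 0 < k → k < 2 ^ e - 1 → ¬ hbar h ∣ X ^ k - 1)
    {i j : ℕ} (hi : i ≤ (2 ^ (2 * e) - (e + 1)) / (e + 1))
    (hj : j ≤ (2 ^ (2 * e) - (e + 1)) / (e + 1)) (p : QPos e 0 × Fin 2)
    (hbi : bAct (N i)⁻¹ p ∈ binInfo e 0) (hbj : bAct (N j)⁻¹ p ∈ binInfo e 0) : i = j := by
  obtain ⟨k, hk, hpk⟩ :=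
    bad_block h he2 hmon hdeg hirr hdvd2 b hb t ht r hr N hN1 hN2 hN3 hN4 i p hbi
  obtain ⟨k', hk', hpk'⟩ :=
    bad_block h he2 hmon hdeg hirr hdvd2 b hb t ht r hr N hN1 hN2 hN3 hN4 j p hbj
  have hrepr : b.repr (r ((e + 1) * i + k)) = b.repr (r ((e + 1) * j + k')) :=
    Finsupp.ext fun j' => ((hpk j').symm.trans (hpk' j'))
  have hrr : r ((e + 1) * i + k) = r ((e + 1) * j + k') := b.repr.injective hrepr
  have heqn := r_inj h hirr (by omega) hdvd2 hmin2 b t ht r hr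
    (block_lt he2 i k hi hk) (block_lt he2 j k' hj hk') hrr
  exact block_eq hk hk' heqn

end Main

end PD

/-- Explicit construction of an `f`-PD-set of size `f+1` for the `Z_4`-linear Hadamard
code `Φ(H_{0,δ})` of length `2^{2δ-1}`, where `δ = e + 1 ≥ 3` and
`f = ⌊(2^{2δ-2} - δ)/δ⌋`.  Here `h ∈ Z_4[x]` is a monic polynomial of degree `δ-1 = e`
dividing `x^ℓ - 1` (`ℓ = 2^{δ-1} - 1 = 2^e - 1`) whose reduction modulo 2 is a
primitive polynomial over `F_2` (irreducible, dividing `x^ℓ - 1` and no `x^k - 1`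
for `0 < k < ℓ`); `R = Z_4[x]/(h)` is the Galois ring `GR(4^{δ-1})`, realised as
`AdjoinRoot h`, with `α = AdjoinRoot.root h` the class of `x`, and `R` is a free
`Z_4`-module with basis `1, α, …, α^{e-1}` (the basis `b`).  The elements of `R` are
enumerated as `r n = t (n % 2^e) + 2 · t (n / 2^e)` (`0`-indexed), where
`(t 0, t 1, …, t ℓ) = (0, 1, α, …, α^{ℓ-1})` is the Teichmüller set.  For
`0 ≤ i ≤ f`, `N_i` is the `δ × δ` matrix over `Z_4` with first row `(1, r (δi))` and
`(k+2)`-nd row `(0, r (δi + k + 1) - r (δi))` for `0 ≤ k ≤ e - 1`, elements of `R`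
written in coordinates w.r.t. `b`.  Then each `N_i` is invertible (hence lies in
`PAut(H_{0,δ})`) and `Φ({N_i⁻¹ : 0 ≤ i ≤ f})` is an `f`-PD-set of size `f+1` for
`Φ(H_{0,δ})` with respect to `Φ(I_{0,δ})`. -/
theorem stmt15 (e : ℕ) (he : 2 ≤ e)
    (h : Polynomial (ZMod 4)) (hmon : h.Monic) (hdeg : h.natDegree = e)
    (hdvd : h ∣ Polynomial.X ^ (2 ^ e - 1) - 1)
    -- the reduction of `h` modulo 2 is a primitive polynomial over `F_2`
    (hirr : Irreducible (h.map (ZMod.castHom (show (2 : ℕ) ∣ 4 by norm_num) (ZMod 2))))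
    (hdvd2 : (h.map (ZMod.castHom (show (2 : ℕ) ∣ 4 by norm_num) (ZMod 2))) ∣
      Polynomial.X ^ (2 ^ e - 1) - 1)
    (hmin : ∀ k, 0 < k → k < 2 ^ e - 1 →
      ¬ (h.map (ZMod.castHom (show (2 : ℕ) ∣ 4 by norm_num) (ZMod 2))) ∣
        Polynomial.X ^ k - 1)
    -- `R = AdjoinRoot h` is free over `Z_4` with basis `1, α, …, α^{e-1}`
    (b : Module.Basis (Fin e) (ZMod 4) (AdjoinRoot h))
    (hb : ∀ j : Fin e, b j = AdjoinRoot.root h ^ (j : ℕ))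
    -- the Teichmüller enumeration `t` and the enumeration `r` of the elements of `R`
    (t : ℕ → AdjoinRoot h)
    (ht : ∀ k, t k = if k = 0 then 0 else AdjoinRoot.root h ^ (k - 1))
    (r : ℕ → AdjoinRoot h)
    (hr : ∀ n, r n = t (n % 2 ^ e) + 2 * t (n / 2 ^ e))
    -- the matrices `N_i`
    (N : ℕ → Matrix (QIdx e 0) (QIdx e 0) (ZMod 4))
    (hN1 : ∀ i, N i (Sum.inl ()) (Sum.inl ()) = 1)
    (hN2 : ∀ i (j : Fin e), N i (Sum.inl ()) (Sum.inr (Sum.inl j)) =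
      b.repr (r ((e + 1) * i)) j)
    (hN3 : ∀ i (k : Fin e), N i (Sum.inr (Sum.inl k)) (Sum.inl ()) = 0)
    (hN4 : ∀ i (k j : Fin e), N i (Sum.inr (Sum.inl k)) (Sum.inr (Sum.inl j)) =
      b.repr (r ((e + 1) * i + (k : ℕ) + 1) - r ((e + 1) * i)) j) :
    -- each `N_i` is invertible over `Z_4`, hence lies in `PAut(H_{0,δ})`
    (∀ i, i ≤ (2 ^ (2 * e) - (e + 1)) / (e + 1) → IsUnit (N i) ∧ inPAutQ e 0 (N i)) ∧
    -- the inverses are pairwise distinct, so the PD-set has size `f + 1`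
    (∀ i j, i ≤ (2 ^ (2 * e) - (e + 1)) / (e + 1) →
      j ≤ (2 ^ (2 * e) - (e + 1)) / (e + 1) → (N i)⁻¹ = (N j)⁻¹ → i = j) ∧
    -- `Φ({N_i⁻¹})` is an `f`-PD-set for `Φ(H_{0,δ})` w.r.t. `Φ(I_{0,δ})`
    (∀ E : Finset (QPos e 0 × Fin 2), E.card = (2 ^ (2 * e) - (e + 1)) / (e + 1) →
      ∃ i ≤ (2 ^ (2 * e) - (e + 1)) / (e + 1),
        ∀ p ∈ E, bAct (N i)⁻¹ p ∉ binInfo e 0) := by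
  classical
  have hunit : ∀ i : ℕ, IsUnit (N i) :=
    PD.N_unit h he hmon hdeg hirr hdvd2 b hb t ht r hr N hN1 hN3 hN4
  refine ⟨fun i _ => ⟨hunit i,
    PD.N_inPAut h he hmon hdeg hirr hdvd2 b hb t ht r hr N hN1 hN2 hN3 hN4 i⟩, ?_, ?_⟩
  · intro i j hi hj hinv
    have hNij : N i = N j := by
      have h1 := Matrix.nonsing_inv_nonsing_inv (N i)
        ((Matrix.isUnit_iff_isUnit_det _).1 (hunit i))
      have h2 := Matrix.nonsing_inv_nonsing_inv (N j)
        ((Matrix.isUnit_iff_isUnit_det _).1 (hunit j))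
      rw [← h1, ← h2, hinv]
    have hrepr : b.repr (r ((e + 1) * i)) = b.repr (r ((e + 1) * j)) := by
      refine Finsupp.ext fun j' => ?_
      rw [← hN2 i j', ← hN2 j j', hNij]
    have hrr : r ((e + 1) * i) = r ((e + 1) * j) := b.repr.injective hrepr
    have hb1 : (e + 1) * i + 0 < 2 ^ e * 2 ^ e := PD.block_lt he i 0 hi (by omega)
    have hb2 : (e + 1) * j + 0 < 2 ^ e * 2 ^ e := PD.block_lt he j 0 hj (by omega)
    rw [Nat.add_zero] at hb1 hb2
    have heqn := PD.r_inj h hirr (by omega) hdvd2 hmin b t ht r hr hb1 hb2 hrr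
    exact Nat.eq_of_mul_eq_mul_left (by omega) heqn
  · intro E hE
    set f := (2 ^ (2 * e) - (e + 1)) / (e + 1) with hf
    by_contra hcon
    push_neg at hcon
    have hex : ∀ i : ℕ, i ≤ f → ∃ p, p ∈ E ∧ bAct (N i)⁻¹ p ∈ binInfo e 0 := by
      intro i hi
      obtain ⟨p, hp1, hp2⟩ := hcon i hi
      exact ⟨p, hp1, hp2⟩
    have hch : ∀ i : ℕ, ∃ p, i ≤ f → p ∈ E ∧ bAct (N i)⁻¹ p ∈ binInfo e 0 := by
      intro i
      by_cases hi : i ≤ f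
      · obtain ⟨p, hp⟩ := hex i hi
        exact ⟨p, fun _ => hp⟩
      · exact ⟨(0, 0), fun hi' => absurd hi' hi⟩
    choose g hg using hch
    have hcard : E.card < (Finset.range (f + 1)).card := by
      rw [hE, Finset.card_range]; omega
    obtain ⟨i, hi, j, hj, hne, heq⟩ :=
      Finset.exists_ne_map_eq_of_card_lt_of_maps_to hcard
        (fun i (hi : i ∈ Finset.range (f + 1)) =>
          (hg i (by simpa [Nat.lt_succ_iff] using hi)).1)
    rw [Finset.mem_range, Nat.lt_succ_iff] at hi hj
    refine hne (PD.bad_unique h he hmon hdeg hirr hdvd2 b hb t ht r hr N hN1 hN2 hN3 hN4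
      hmin hi hj (g i) (hg i hi).2 ?_)
    rw [heq]
    exact (hg j hj).2
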